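/- Let f_1 and f_2 be two reward functions and T ∈ ℕ a time horizon with Σ_{n=1}^T f_1(n) ≥ Σ_{n=1}^T f_2(n). Then for every integer m with 0 ≤ m ≤ T, Σ_{n=1}^{T−m} f_1(n) + Σ_{n=1}^{m} f_2(n) ≤ Σ_{n=1}^T f_1(n); that is, in a two-armed instance, pulling the arm with the larger T-step cumulative reward for all T steps dominates every split of the T pulls between the two arms. -/

import Mathlib

open scoped Classical

/-- A reward function: bounded in [0,1], nondecreasing, with decreasing marginal returns. -/
def IsRewardFn (f : ℕ → ℝ) : Prop :=
  (∀ n, 0 ≤ f n) ∧ (∀ n, f n ≤ 1) ∧ Monotone f ∧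
    ∀ n, 1 ≤ n → f (n + 1) - f n ≤ f n - f (n - 1)

/-- Cumulative reward from pulling an arm with reward function `f` for `N` pulls. -/
noncomputable def Rew (f : ℕ → ℝ) (N : ℕ) : ℝ := ∑ n ∈ Finset.Icc 1 N, f n

lemma rew_ioc (f : ℕ → ℝ) (N : ℕ) : Rew f N = ∑ n ∈ Finset.Ioc 0 N, f n := by
  rw [Rew]
  congr 1

lemma key_chebyshev (f : ℕ → ℝ) (hf : Monotone f) (k m : ℕ) :
    (m : ℝ) * ∑ n ∈ Finset.Ioc 0 k, f n ≤ (k : ℝ) * ∑ n ∈ Finset.Ioc k (k + m), f n := by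
  have h1 : ∑ n ∈ Finset.Ioc 0 k, f n ≤ (k : ℝ) * f k := by
    calc ∑ n ∈ Finset.Ioc 0 k, f n ≤ ∑ _n ∈ Finset.Ioc 0 k, f k :=
          Finset.sum_le_sum (fun n hn => hf (Finset.mem_Ioc.mp hn).2)
      _ = (k : ℝ) * f k := by simp [Finset.sum_const, Nat.card_Ioc]
  have h2 : (m : ℝ) * f k ≤ ∑ n ∈ Finset.Ioc k (k + m), f n := by
    calc (m : ℝ) * f k = ∑ _n ∈ Finset.Ioc k (k + m), f k := by
          simp [Finset.sum_const, Nat.card_Ioc]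
      _ ≤ _ := Finset.sum_le_sum (fun n hn => hf (le_of_lt (Finset.mem_Ioc.mp hn).1))
  calc (m : ℝ) * ∑ n ∈ Finset.Ioc 0 k, f n ≤ (m : ℝ) * ((k : ℝ) * f k) :=
        mul_le_mul_of_nonneg_left h1 (Nat.cast_nonneg m)
    _ = (k : ℝ) * ((m : ℝ) * f k) := by ring
    _ ≤ (k : ℝ) * ∑ n ∈ Finset.Ioc k (k + m), f n :=
        mul_le_mul_of_nonneg_left h2 (Nat.cast_nonneg k)

/-- In a two-armed instance, pulling the arm with the larger `T`-step cumulative reward for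
all `T` steps dominates every split of the `T` pulls between the two arms. -/
theorem two_arm_single_arm_dominates (f₁ f₂ : ℕ → ℝ)
    (h₁ : IsRewardFn f₁) (h₂ : IsRewardFn f₂) (T : ℕ)
    (hT : Rew f₂ T ≤ Rew f₁ T) :
    ∀ m : ℕ, m ≤ T → Rew f₁ (T - m) + Rew f₂ m ≤ Rew f₁ T := by
  intro m hm
  obtain ⟨k, rfl⟩ : ∃ k, T = k + m := ⟨T - m, (Nat.sub_add_cancel hm).symm⟩
  have hk : k + m - m = k := by omega
  rw [hk, rew_ioc, rew_ioc, rew_ioc]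
  have hsplit : ∑ n ∈ Finset.Ioc 0 k, f₁ n + ∑ n ∈ Finset.Ioc k (k + m), f₁ n
      = ∑ n ∈ Finset.Ioc 0 (k + m), f₁ n :=
    Finset.sum_Ioc_consecutive _ (Nat.zero_le k) (Nat.le_add_right k m)
  rw [← hsplit]
  have hmain : ∑ n ∈ Finset.Ioc 0 m, f₂ n ≤ ∑ n ∈ Finset.Ioc k (k + m), f₁ n := by
    rcases Nat.eq_zero_or_pos (k + m) with hT0 | hTpos
    · have hm0 : m = 0 := by omega
      have hk0 : k = 0 := by omega
      simp [hm0, hk0]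
    · have hTpos' : (0 : ℝ) < (k + m : ℕ) := by exact_mod_cast hTpos
      rw [← mul_le_mul_iff_right₀ hTpos']
      have hsplit₂ : ∑ n ∈ Finset.Ioc 0 m, f₂ n + ∑ n ∈ Finset.Ioc m (m + k), f₂ n
          = ∑ n ∈ Finset.Ioc 0 (m + k), f₂ n :=
        Finset.sum_Ioc_consecutive _ (Nat.zero_le m) (Nat.le_add_right m k)
      have step1 : ((k + m : ℕ) : ℝ) * ∑ n ∈ Finset.Ioc 0 m, f₂ n
          ≤ (m : ℝ) * ∑ n ∈ Finset.Ioc 0 (k + m), f₂ n := by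
        have := key_chebyshev f₂ h₂.2.2.1 m k
        have hcomm : k + m = m + k := Nat.add_comm k m
        rw [hcomm, ← hsplit₂]
        push_cast
        nlinarith [this]
      have step2 : (m : ℝ) * ∑ n ∈ Finset.Ioc 0 (k + m), f₂ n
          ≤ (m : ℝ) * ∑ n ∈ Finset.Ioc 0 (k + m), f₁ n := by
        apply mul_le_mul_of_nonneg_left _ (Nat.cast_nonneg m)
        rw [← rew_ioc, ← rew_ioc]; exact hT
      have step3 : (m : ℝ) * ∑ n ∈ Finset.Ioc 0 (k + m), f₁ n
          ≤ ((k + m : ℕ) : ℝ) * ∑ n ∈ Finset.Ioc k (k + m), f₁ n := by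
        have := key_chebyshev f₁ h₁.2.2.1 k m
        rw [← hsplit]
        push_cast
        nlinarith [this]
      linarith
  linarith
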